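/- Let f_d = Σ_{i=1}^m c_i x^{α_i} − d·x^β ∈ ℝ[x_1,…,x_n] with α_i ∈ (2ℕ)^n, c_i > 0 for i = 1,…,m, β ∈ New(f_d)° ∩ ℕ^n, and dim(New(f_d)) = n. Let d* := sup{d ∈ ℝ : f_d is nonnegative on ℝ^n}. Then f_d is nonnegative on ℝ^n if and only if either β ∈ (2ℕ)^n and d ≤ d*, or β ∉ (2ℕ)^n and |d| ≤ d*. Moreover, the polynomial f_{d*} has exactly one zero in the open positive orthant ℝ_+^n. -/

import Mathlib

open MvPolynomial Classical

noncomputable section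

/-- The real point associated to an exponent vector. -/
def toR {n : ℕ} (α : Fin n →₀ ℕ) : Fin n → ℝ := fun j => (α j : ℝ)

/-- A lattice point is even if all its coordinates are even, i.e. it lies in `(2ℕ)^n`. -/
def IsEvenPt {n : ℕ} (α : Fin n →₀ ℕ) : Prop := ∀ j, Even (α j)

/-- The Newton polytope of a polynomial: the convex hull of its support. -/
def newton {n : ℕ} (f : MvPolynomial (Fin n) ℝ) : Set (Fin n → ℝ) :=
  convexHull ℝ (toR '' (f.support : Set (Fin n →₀ ℕ)))

/-- A polynomial is nonnegative (PSD) if it is nonnegative at every real point. -/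
def Nonneg {n : ℕ} (f : MvPolynomial (Fin n) ℝ) : Prop :=
  ∀ x : Fin n → ℝ, 0 ≤ eval x f

/-! ### Auxiliary material -/

/-- Value of a monomial with exponent vector `a` at the point `x`. -/
def Ev {n : ℕ} (a : Fin n →₀ ℕ) (x : Fin n → ℝ) : ℝ := ∏ j, x j ^ a j

lemma eval_monomial' {n : ℕ} (a : Fin n →₀ ℕ) (r : ℝ) (x : Fin n → ℝ) :
    eval x (monomial a r) = r * Ev a x := by
  rw [eval_monomial, Ev, Finsupp.prod_fintype]
  intro i; rfl

lemma Ev_nonneg {n : ℕ} {a : Fin n →₀ ℕ} (ha : IsEvenPt a) (x : Fin n → ℝ) : 0 ≤ Ev a x :=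
  Finset.prod_nonneg fun j _ => (ha j).pow_nonneg _

lemma Ev_pos {n : ℕ} (a : Fin n →₀ ℕ) {x : Fin n → ℝ} (hx : ∀ j, 0 < x j) : 0 < Ev a x :=
  Finset.prod_pos fun j _ => pow_pos (hx j) _

lemma Ev_even_abs {n : ℕ} {a : Fin n →₀ ℕ} (ha : IsEvenPt a) (x : Fin n → ℝ) :
    Ev a (fun j => |x j|) = Ev a x :=
  Finset.prod_congr rfl fun j _ => (ha j).pow_abs _

lemma abs_Ev {n : ℕ} (a : Fin n →₀ ℕ) (x : Fin n → ℝ) :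
    |Ev a x| = Ev a (fun j => |x j|) := by
  rw [Ev, Ev, Finset.abs_prod]
  exact Finset.prod_congr rfl fun j _ => abs_pow _ _

lemma Ev_exp {n : ℕ} (a : Fin n →₀ ℕ) (y : Fin n → ℝ) :
    Ev a (fun j => Real.exp (y j)) = Real.exp (∑ j, (a j : ℝ) * y j) := by
  rw [Ev, Real.exp_sum]
  exact Finset.prod_congr rfl fun j _ => by rw [← Real.exp_nat_mul]

lemma exp_midpoint_le (p q : ℝ) :
    Real.exp ((p + q) / 2) ≤ (Real.exp p + Real.exp q) / 2 := by
  rcases eq_or_ne p q with h | h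
  · subst h; simp [add_self_div_two]
  · have := strictConvexOn_exp.2 (Set.mem_univ p) (Set.mem_univ q) h
      (by norm_num : (0:ℝ) < 1/2) (by norm_num : (0:ℝ) < 1/2) (by norm_num)
    simp only [smul_eq_mul] at this
    have e : (p + q) / 2 = 1/2 * p + 1/2 * q := by ring
    rw [e]; linarith

lemma exp_midpoint_lt {p q : ℝ} (h : p ≠ q) :
    Real.exp ((p + q) / 2) < (Real.exp p + Real.exp q) / 2 := by
  have := strictConvexOn_exp.2 (Set.mem_univ p) (Set.mem_univ q) h
    (by norm_num : (0:ℝ) < 1/2) (by norm_num : (0:ℝ) < 1/2) (by norm_num)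
  simp only [smul_eq_mul] at this
  have e : (p + q) / 2 = 1/2 * p + 1/2 * q := by ring
  rw [e]; linarith

lemma dot_linear {n : ℕ} (y : Fin n → ℝ) :
    IsLinearMap ℝ (fun w : Fin n → ℝ => ∑ j, w j * y j) := by
  constructor
  · intro a b
    rw [← Finset.sum_add_distrib]
    exact Finset.sum_congr rfl fun j _ => by simp [add_mul]
  · intro t a
    rw [smul_eq_mul, Finset.mul_sum]
    exact Finset.sum_congr rfl fun j _ => by simp [mul_assoc]

/-- For `f_d = ∑ c_i x^{α_i} − d x^β` with even `α_i`, `c_i > 0`,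
`β` an interior lattice point of the Newton polytope, and full-dimensional Newton polytope,
setting `d* = sup{d : f_d is PSD}`, we have: `f_d` is PSD iff (`β` is even and `d ≤ d*`) or
(`β` is not even and `|d| ≤ d*`); moreover `f_{d*}` has exactly one zero in the open positive
orthant. -/
theorem stmt2 {n m : ℕ} (c : Fin m → ℝ) (α : Fin m → (Fin n →₀ ℕ)) (β : Fin n →₀ ℕ)
    (hα : ∀ i, IsEvenPt (α i)) (hc : ∀ i, 0 < c i)
    (F : ℝ → MvPolynomial (Fin n) ℝ)
    (hF : ∀ d : ℝ, F d = (∑ i, monomial (α i) (c i)) - monomial β d)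
    (hβ : toR β ∈ interior (convexHull ℝ (toR '' Set.range α)))
    (hdim : affineSpan ℝ (toR '' Set.range α) = ⊤)
    (dstar : ℝ) (hdstar : dstar = sSup {d : ℝ | Nonneg (F d)}) :
    (∀ d : ℝ, Nonneg (F d) ↔
      ((IsEvenPt β ∧ d ≤ dstar) ∨ (¬ IsEvenPt β ∧ |d| ≤ dstar))) ∧
    (∃! x : Fin n → ℝ, (∀ j, 0 < x j) ∧ eval x (F dstar) = 0) := by
  classical
  -- notation
  set L : Fin m → (Fin n → ℝ) → ℝ :=
    fun i y => ∑ j, ((α i j : ℝ) - (β j : ℝ)) * y j with hL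
  set G : (Fin n → ℝ) → ℝ := fun y => ∑ i, c i * Real.exp (L i y) with hG
  -- m is nonzero
  have hmem : toR β ∈ convexHull ℝ (toR '' Set.range α) := interior_subset hβ
  have hm : Nonempty (Fin m) := by
    by_contra h
    rw [not_nonempty_iff] at h
    have : Set.range α = ∅ := Set.range_eq_empty _
    rw [this] at hmem
    simp at hmem
  -- evaluation formula
  have hev : ∀ (d : ℝ) (x : Fin n → ℝ),
      eval x (F d) = (∑ i, c i * Ev (α i) x) - d * Ev β x := by
    intro d x
    rw [hF d, map_sub, map_sum]
    simp only [eval_monomial']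
  -- evaluation at exponential points
  have hGx : ∀ (y : Fin n → ℝ) (d : ℝ),
      eval (fun j => Real.exp (y j)) (F d)
        = Real.exp (∑ j, (β j : ℝ) * y j) * (G y - d) := by
    intro y d
    rw [hev]
    have h1 : ∀ i, Ev (α i) (fun j => Real.exp (y j))
        = Real.exp (∑ j, (β j : ℝ) * y j) * Real.exp (L i y) := by
      intro i
      rw [Ev_exp, ← Real.exp_add]
      congr 1
      rw [hL]
      rw [← Finset.sum_add_distrib]
      exact Finset.sum_congr rfl fun j _ => by ring
    rw [Ev_exp]
    simp only [h1, hG]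
    rw [mul_sub, Finset.mul_sum]
    congr 1
    · exact Finset.sum_congr rfl fun i _ => by ring
    · ring
  -- positivity of G
  have hGpos : ∀ y, 0 < G y := by
    intro y
    exact Finset.sum_pos (fun i _ => mul_pos (hc i) (Real.exp_pos _)) Finset.univ_nonempty
  -- β is strictly positive
  have hβpos : ∀ j, 0 < β j := by
    intro j
    by_contra hj
    have hj0 : (β j : ℕ) = 0 := Nat.eq_zero_of_not_pos hj
    have hβj : toR β j = 0 := by simp [toR, hj0]
    -- the hull lies in the halfspace {w | 0 ≤ w j}
    have hsub : convexHull ℝ (toR '' Set.range α) ⊆ {w : Fin n → ℝ | 0 ≤ w j} := by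
      apply convexHull_min
      · rintro w ⟨p, ⟨i, rfl⟩, rfl⟩
        show (0:ℝ) ≤ toR (α i) j
        exact Nat.cast_nonneg _
      · have hlin : IsLinearMap ℝ (fun w : Fin n → ℝ => w j) := ⟨fun a b => rfl, fun t a => rfl⟩
        exact convex_halfSpace_ge hlin 0
    obtain ⟨ε, hε, hball⟩ := Metric.mem_nhds_iff.1 (mem_interior_iff_mem_nhds.1 hβ)
    set z : Fin n → ℝ := fun k => if k = j then -(ε/2) else toR β k with hz
    have hzball : z ∈ Metric.ball (toR β) ε := by
      rw [Metric.mem_ball]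
      rw [dist_pi_lt_iff hε]
      intro k
      rcases eq_or_ne k j with rfl | hk
      · simp only [hz, if_pos rfl, hβj]
        rw [Real.dist_eq]
        rw [abs_of_nonpos (by linarith)]
        linarith
      · simp [hz, if_neg hk, dist_self, hε]
    have := hsub (hball hzball)
    simp only [hz, Set.mem_setOf_eq, if_pos rfl, if_true, eq_self_iff_true] at this
    linarith
  -- forward implication
  have fwd : ∀ d : ℝ, Nonneg (F d) → ∀ y, d ≤ G y := by
    intro d hd y
    have h1 := hd (fun j => Real.exp (y j))
    rw [hGx y d] at h1
    have h2 := Real.exp_pos (∑ j, (β j : ℝ) * y j)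
    nlinarith
  -- kernel fact from full dimensionality
  have hker : ∀ w : Fin n → ℝ, (∀ i, L i w = 0) → w = 0 := by
    intro w hw
    -- the linear functional u ↦ ∑ j, (u j) * (w j)
    set l : (Fin n → ℝ) →ₗ[ℝ] ℝ := ∑ j, w j • LinearMap.proj j with hl
    have hlapp : ∀ u : Fin n → ℝ, l u = ∑ j, w j * u j := by
      intro u
      rw [hl]
      simp [LinearMap.sum_apply]
    -- the vector span is everything
    have hvs : vectorSpan ℝ (toR '' Set.range α) = ⊤ := by
      rw [← direction_affineSpan, hdim, AffineSubspace.direction_top]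
    -- differences of the α's kill l
    have hdiff : ∀ i k : Fin m, l (toR (α i) - toR (α k)) = 0 := by
      intro i k
      have h1 : ∀ i : Fin m, l (toR (α i)) = ∑ j, w j * (β j : ℝ) := by
        intro i
        have h2 := hw i
        rw [hL] at h2
        rw [hlapp]
        have h3 : ∑ j, ((α i j : ℝ) - (β j : ℝ)) * w j = 0 := h2
        have h4 : ∑ j, w j * (α i j : ℝ) - ∑ j, w j * (β j : ℝ)
            = ∑ j, ((α i j : ℝ) - (β j : ℝ)) * w j := by
          rw [← Finset.sum_sub_distrib]
          exact Finset.sum_congr rfl fun j _ => by ring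
        have h5 : toR (α i) = fun j => (α i j : ℝ) := rfl
        rw [h5]
        have : ∑ j, w j * (α i j : ℝ) - ∑ j, w j * (β j : ℝ) = 0 := by rw [h4, h3]
        linarith
      rw [map_sub, h1 i, h1 k, sub_self]
    -- hence l vanishes on the vector span, i.e. everywhere
    have hker_top : LinearMap.ker l = ⊤ := by
      rw [← top_le_iff, ← hvs, vectorSpan_def]
      rw [Submodule.span_le]
      rintro u ⟨p, ⟨pp, ⟨i, rfl⟩, rfl⟩, q, ⟨qq, ⟨k, rfl⟩, rfl⟩, rfl⟩
      exact hdiff i k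
    have hl0 : l = 0 := LinearMap.ker_eq_top.1 hker_top
    funext j
    have := congrArg (fun (f : (Fin n → ℝ) →ₗ[ℝ] ℝ) => f (Pi.single j 1)) hl0
    simp only [LinearMap.zero_apply] at this
    rw [hlapp] at this
    simp only [Pi.single_apply] at this
    rw [Finset.sum_eq_single j (fun k _ hk => by simp [if_neg hk]) (by simp)] at this
    simpa using this
  -- coercivity
  obtain ⟨ε, hε, hcoer⟩ :
      ∃ ε > 0, ∀ y : Fin n → ℝ, y ≠ 0 → ∃ i, ε * ‖y‖ ≤ L i y := by
    obtain ⟨ε₀, hε₀, hball⟩ := Metric.mem_nhds_iff.1 (mem_interior_iff_mem_nhds.1 hβ)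
    refine ⟨ε₀ / 2, by linarith, ?_⟩
    intro y hy
    have hny : 0 < ‖y‖ := norm_pos_iff.2 hy
    -- the shifted point q lies in the hull
    set q : Fin n → ℝ := toR β + (ε₀ / 2 / ‖y‖) • y with hq
    have hqball : q ∈ Metric.ball (toR β) ε₀ := by
      rw [Metric.mem_ball, dist_eq_norm, hq, add_sub_cancel_left, norm_smul]
      rw [Real.norm_eq_abs, abs_of_pos (by positivity)]
      rw [div_mul_cancel₀ _ hny.ne']
      linarith
    have hqhull : q ∈ convexHull ℝ (toR '' Set.range α) := hball hqball
    -- the max of the linear functional over the α's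
    set M : ℝ := Finset.univ.sup' (Finset.univ_nonempty) (fun i => ∑ j, toR (α i) j * y j)
      with hM
    have hsub : convexHull ℝ (toR '' Set.range α) ⊆ {w : Fin n → ℝ | ∑ j, w j * y j ≤ M} := by
      apply convexHull_min
      · rintro w ⟨p, ⟨i, rfl⟩, rfl⟩
        exact Finset.le_sup' (f := fun i => ∑ j, toR (α i) j * y j) (Finset.mem_univ i)
      · exact convex_halfSpace_le (dot_linear y) M
    obtain ⟨i, -, hiM⟩ := Finset.exists_mem_eq_sup' (Finset.univ_nonempty) 
      (fun i => ∑ j, toR (α i) j * y j)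
    refine ⟨i, ?_⟩
    have hqM : ∑ j, q j * y j ≤ M := hsub hqhull
    -- compute ∑ q j * y j
    have hsq : ‖y‖ ^ 2 ≤ ∑ j, y j * y j := by
      have h1 : ‖y‖ ≤ Real.sqrt (∑ j, y j * y j) := by
        rw [pi_norm_le_iff_of_nonneg (Real.sqrt_nonneg _)]
        intro j
        rw [Real.norm_eq_abs, ← Real.sqrt_sq_eq_abs]
        apply Real.sqrt_le_sqrt
        rw [sq]
        exact Finset.single_le_sum (f := fun j => y j * y j)
          (fun k _ => mul_self_nonneg _) (Finset.mem_univ j)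
      calc ‖y‖ ^ 2 ≤ Real.sqrt (∑ j, y j * y j) ^ 2 := by
            apply pow_le_pow_left₀ (norm_nonneg _) h1
        _ = ∑ j, y j * y j := Real.sq_sqrt (Finset.sum_nonneg fun j _ => mul_self_nonneg _)
    have hqval : ∑ j, q j * y j
        = ∑ j, toR β j * y j + (ε₀ / 2 / ‖y‖) * ∑ j, y j * y j := by
      rw [hq, Finset.mul_sum, ← Finset.sum_add_distrib]
      exact Finset.sum_congr rfl fun j _ => by simp [Pi.add_apply]; ring
    have hlow : ∑ j, toR β j * y j + ε₀ / 2 * ‖y‖ ≤ ∑ j, q j * y j := by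
      rw [hqval]
      have h2 : ε₀ / 2 * ‖y‖ ≤ (ε₀ / 2 / ‖y‖) * ∑ j, y j * y j := by
        have h3 : (ε₀ / 2 / ‖y‖) * ‖y‖ ^ 2 ≤ (ε₀ / 2 / ‖y‖) * ∑ j, y j * y j :=
          mul_le_mul_of_nonneg_left hsq (by positivity)
        calc ε₀ / 2 * ‖y‖ = (ε₀ / 2 / ‖y‖) * ‖y‖ ^ 2 := by
              field_simp
          _ ≤ _ := h3
      linarith
    -- conclude
    have hfin : ∑ j, toR β j * y j + ε₀ / 2 * ‖y‖ ≤ ∑ j, toR (α i) j * y j := by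
      rw [← hiM]
      exact le_trans hlow hqM
    show ε₀ / 2 * ‖y‖ ≤ ∑ j, ((α i j : ℝ) - (β j : ℝ)) * y j
    have hsplit : ∑ j, ((α i j : ℝ) - (β j : ℝ)) * y j
        = ∑ j, toR (α i) j * y j - ∑ j, toR β j * y j := by
      rw [← Finset.sum_sub_distrib]
      exact Finset.sum_congr rfl fun j _ => by simp [toR]; ring
    rw [hsplit]
    linarith
  -- existence of a minimizer
  obtain ⟨ystar, hystar⟩ : ∃ ystar, ∀ y, G ystar ≤ G y := by
    have hGcont : Continuous G := by
      rw [hG]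
      refine continuous_finset_sum _ fun i _ => (continuous_const.mul ?_)
      refine Real.continuous_exp.comp ?_
      refine continuous_finset_sum _ fun j _ => ?_
      exact continuous_const.mul (continuous_apply j)
    set cmin : ℝ := Finset.univ.inf' Finset.univ_nonempty c with hcmin
    have hcminpos : 0 < cmin := by
      obtain ⟨i, -, hi⟩ := Finset.exists_mem_eq_inf' Finset.univ_nonempty c
      rw [hcmin, hi]; exact hc i
    have hlb : ∀ y : Fin n → ℝ, y ≠ 0 → cmin * Real.exp (ε * ‖y‖) ≤ G y := by
      intro y hy
      obtain ⟨i, hi⟩ := hcoer y hy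
      have h1 : cmin * Real.exp (ε * ‖y‖) ≤ c i * Real.exp (L i y) := by
        apply mul_le_mul (Finset.inf'_le c (Finset.mem_univ i))
          (Real.exp_le_exp.2 hi) (Real.exp_pos _).le (hc i).le
      refine le_trans h1 ?_
      rw [hG]
      exact Finset.single_le_sum
        (f := fun i => c i * Real.exp (L i y))
        (fun k _ => mul_nonneg (hc k).le (Real.exp_pos _).le) (Finset.mem_univ i)
    have htend : Filter.Tendsto G (Filter.cocompact _) Filter.atTop := by
      have h1 : Filter.Tendsto (fun t : ℝ => cmin * Real.exp (ε * t))
          Filter.atTop Filter.atTop := by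
        apply Filter.Tendsto.const_mul_atTop hcminpos
        exact Real.tendsto_exp_atTop.comp (Filter.tendsto_id.const_mul_atTop hε)
      have h2 : Filter.Tendsto (fun y : Fin n → ℝ => cmin * Real.exp (ε * ‖y‖))
          (Filter.cocompact _) Filter.atTop := h1.comp tendsto_norm_cocompact_atTop
      apply Filter.tendsto_atTop_mono' _ _ h2
      have hmemco : {y : Fin n → ℝ | cmin * Real.exp (ε * ‖y‖) ≤ G y}
          ∈ Filter.cocompact (Fin n → ℝ) := by
        rw [Filter.mem_cocompact]
        refine ⟨{0}, isCompact_singleton, ?_⟩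
        intro y hy
        exact hlb y (by simpa using hy)
      exact hmemco
    exact hGcont.exists_forall_le htend
  set a := G ystar with ha
  have hapos : 0 < a := hGpos ystar
  -- uniqueness of the minimizer
  have huniq : ∀ y, G y ≤ a → y = ystar := by
    intro y hy
    by_contra hne
    -- some exponent separates y and ystar
    have hsep : ∃ i, L i y ≠ L i ystar := by
      by_contra hall
      push_neg at hall
      have hzero : ∀ i, L i (y - ystar) = 0 := by
        intro i
        have h1 : L i (y - ystar) = L i y - L i ystar := by
          rw [hL]
          rw [← Finset.sum_sub_distrib]
          exact Finset.sum_congr rfl fun j _ => by simp [Pi.sub_apply]; ring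
        rw [h1, hall i, sub_self]
      exact hne (sub_eq_zero.1 (hker _ hzero))
    obtain ⟨i0', hi0'⟩ := hsep
    -- midpoint
    set w : Fin n → ℝ := fun j => (y j + ystar j) / 2 with hw
    have hLmid : ∀ i, L i w = (L i y + L i ystar) / 2 := by
      intro i
      rw [hL]
      simp only [hw]
      rw [← Finset.sum_add_distrib, Finset.sum_div]
      exact Finset.sum_congr rfl fun j _ => by ring
    have hterm : ∀ i, c i * Real.exp (L i w)
        ≤ c i * ((Real.exp (L i y) + Real.exp (L i ystar)) / 2) := by
      intro i
      apply mul_le_mul_of_nonneg_left _ (hc i).le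
      rw [hLmid i]
      exact exp_midpoint_le _ _
    have hterm0 : c i0' * Real.exp (L i0' w)
        < c i0' * ((Real.exp (L i0' y) + Real.exp (L i0' ystar)) / 2) := by
      apply mul_lt_mul_of_pos_left _ (hc i0')
      rw [hLmid i0']
      exact exp_midpoint_lt hi0'
    have hmidlt : G w < (G y + G ystar) / 2 := by
      rw [hG]
      simp only
      calc ∑ i, c i * Real.exp (L i w)
          < ∑ i, c i * ((Real.exp (L i y) + Real.exp (L i ystar)) / 2) :=
            Finset.sum_lt_sum (fun i _ => hterm i) ⟨i0', Finset.mem_univ i0', hterm0⟩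
        _ = ((∑ i, c i * Real.exp (L i y)) + ∑ i, c i * Real.exp (L i ystar)) / 2 := by
            rw [← Finset.sum_add_distrib, Finset.sum_div]
            exact Finset.sum_congr rfl fun i _ => by ring
    have := hystar w
    have h3 : G y ≤ a := hy
    have h4 : G ystar = a := rfl
    rw [h4] at hmidlt
    linarith
  -- PSD from |d| ≤ a
  have bwd : ∀ d : ℝ, |d| ≤ a → Nonneg (F d) := by
    intro d hd x
    rw [hev]
    by_cases hzero : ∃ j, x j = 0
    · obtain ⟨j, hj⟩ := hzero
      have hEβ : Ev β x = 0 := by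
        rw [Ev]
        apply Finset.prod_eq_zero (Finset.mem_univ j)
        rw [hj]
        exact zero_pow (hβpos j).ne'
      rw [hEβ, mul_zero, sub_zero]
      exact Finset.sum_nonneg fun i _ => mul_nonneg (hc i).le (Ev_nonneg (hα i) x)
    · push_neg at hzero
      set y : Fin n → ℝ := fun j => Real.log |x j| with hy
      have hxy : ∀ j, |x j| = Real.exp (y j) := fun j =>
        (Real.exp_log (abs_pos.2 (hzero j))).symm
      have habs : (fun j => |x j|) = (fun j => Real.exp (y j)) := funext hxy
      have h1 : ∀ i, Ev (α i) x = Ev (α i) (fun j => Real.exp (y j)) := fun i => by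
        rw [← Ev_even_abs (hα i) x, habs]
      have h2 : d * Ev β x ≤ |d| * Ev β (fun j => Real.exp (y j)) := by
        calc d * Ev β x ≤ |d * Ev β x| := le_abs_self _
          _ = |d| * |Ev β x| := abs_mul _ _
          _ = |d| * Ev β (fun j => |x j|) := by rw [abs_Ev]
          _ = |d| * Ev β (fun j => Real.exp (y j)) := by rw [habs]
      have h4 : |d| ≤ G y := le_trans hd (hystar y)
      have h5 : 0 ≤ (∑ i, c i * Ev (α i) (fun j => Real.exp (y j)))
          - |d| * Ev β (fun j => Real.exp (y j)) := by
        rw [← hev |d| (fun j => Real.exp (y j)), hGx y |d|]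
        exact mul_nonneg (Real.exp_pos _).le (by linarith)
      have hsum : ∑ i, c i * Ev (α i) x = ∑ i, c i * Ev (α i) (fun j => Real.exp (y j)) :=
        Finset.sum_congr rfl fun i _ => by rw [h1 i]
      rw [hsum]
      linarith
  -- even case: PSD from d ≤ a
  have bwd_even : IsEvenPt β → ∀ d : ℝ, d ≤ a → Nonneg (F d) := by
    intro hβe d hd x
    rcases le_or_gt d 0 with h0 | h0
    · rw [hev]
      have h1 : 0 ≤ ∑ i, c i * Ev (α i) x :=
        Finset.sum_nonneg fun i _ => mul_nonneg (hc i).le (Ev_nonneg (hα i) x)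
      have h2 : 0 ≤ Ev β x := Ev_nonneg hβe x
      nlinarith
    · exact bwd d (by rwa [abs_of_pos h0]) x
  -- odd case: sign symmetry
  have odd_symm : ¬IsEvenPt β → ∀ d : ℝ, Nonneg (F d) → Nonneg (F (-d)) := by
    intro hβo d hd x
    obtain ⟨j0, hj0⟩ : ∃ j, Odd (β j) := by
      by_contra h
      push_neg at h
      exact hβo fun j => Nat.not_odd_iff_even.1 (h j)
    set x' : Fin n → ℝ := fun k => if k = j0 then -x k else x k with hx'
    have hEα : ∀ i, Ev (α i) x' = Ev (α i) x := by
      intro i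
      apply Finset.prod_congr rfl
      intro j _
      rcases eq_or_ne j j0 with rfl | hj
      · simp only [hx', if_pos rfl]
        exact (hα i j).neg_pow _
      · simp [hx', if_neg hj]
    have hEβ : Ev β x' = - Ev β x := by
      rw [Ev, Ev]
      rw [← Finset.prod_erase_mul _ _ (Finset.mem_univ j0),
          ← Finset.prod_erase_mul _ _ (Finset.mem_univ j0)]
      have h1 : ((Finset.univ.erase j0).prod (fun j => x' j ^ β j))
          = ((Finset.univ.erase j0).prod (fun j => x j ^ β j)) := by
        apply Finset.prod_congr rfl
        intro j hj
        have hne : j ≠ j0 := Finset.ne_of_mem_erase hj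
        simp [hx', if_neg hne]
      have h2 : x' j0 ^ β j0 = -(x j0 ^ β j0) := by
        simp only [hx', if_pos rfl]
        exact hj0.neg_pow _
      rw [h1, h2]
      ring
    have hthis := hd x'
    rw [hev] at hthis ⊢
    rw [hEβ] at hthis
    simp only [hEα] at hthis
    linarith
  -- the characterization of the PSD set
  have hchar : ∀ d : ℝ, Nonneg (F d) ↔
      ((IsEvenPt β ∧ d ≤ a) ∨ (¬ IsEvenPt β ∧ |d| ≤ a)) := by
    intro d
    by_cases hβe : IsEvenPt β
    · simp only [hβe, true_and, not_true, false_and, or_false]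
      exact ⟨fun h => fwd d h ystar, bwd_even hβe d⟩
    · simp only [hβe, false_and, not_false_iff, true_and, false_or]
      constructor
      · intro h
        exact abs_le.2 ⟨neg_le.1 (by simpa using fwd (-d) (odd_symm hβe d h) ystar),
          fwd d h ystar⟩
      · exact bwd d
  -- dstar = a
  have hda : dstar = a := by
    by_cases hβe : IsEvenPt β
    · have : {d : ℝ | Nonneg (F d)} = Set.Iic a := by
        ext d
        simp [hchar d, hβe, Set.mem_Iic]
      rw [hdstar, this, csSup_Iic]
    · have : {d : ℝ | Nonneg (F d)} = Set.Icc (-a) a := by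
        ext d
        simp [hchar d, hβe, Set.mem_Icc, abs_le]
      rw [hdstar, this, csSup_Icc (by linarith)]
  subst hda
  constructor
  · exact hchar
  · -- unique zero in positive orthant
    refine ⟨fun j => Real.exp (ystar j), ⟨fun j => Real.exp_pos _, ?_⟩, ?_⟩
    · rw [hGx ystar a]
      simp
      exact sub_self _
    · rintro x ⟨hxpos, hxzero⟩
      have hx : x = fun j => Real.exp (Real.log (x j)) := by
        funext j
        rw [Real.exp_log (hxpos j)]
      rw [hx, hGx _ a] at hxzero
      have h2 := (Real.exp_pos (∑ j, (β j : ℝ) * Real.log (x j))).ne'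
      have h3 : G (fun j => Real.log (x j)) = a := by
        rcases mul_eq_zero.1 hxzero with h | h
        · exact absurd h h2
        · linarith [sub_eq_zero.1 h]
      have h4 := huniq _ h3.le
      rw [hx]
      funext j
      rw [congrFun h4 j]
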